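/- Let D be a k×k Metzler matrix, c > 0, μ ≤ 0, and ξ ∈ ℝ^k a positive right eigenvector of D with D ξ = μ ξ; set ξ̄ = max_i ξ_i. Let u : [0,∞) → ℝ^k be a nonnegative solution of the cumulant system with u_0 = λ ∈ ℝ^k, λ ≥ 0, and define B_t = min_{1≤i≤k} u_{t,i}/ξ_i. If μ = 0, then for all t ≥ 0, B_t ≥ B_0 / (1 + (c ξ̄ / 2) B_0 t). If μ < 0, then for all t ≥ 0, B_t ≥ B_0 e^{μ t} / (1 + (c ξ̄ / (2|μ|)) B_0 (1 − e^{μ t})). -/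

import Mathlib

open Filter Topology

private lemma contOn_inf' {ι : Type*} {S : Set ℝ} {s : Finset ι} (hs : s.Nonempty)
    (f : ι → ℝ → ℝ) (hf : ∀ i ∈ s, ContinuousOn (f i) S) :
    ContinuousOn (fun t => s.inf' hs fun i => f i t) S := by
  induction hs using Finset.Nonempty.cons_induction with
  | singleton a => simp only [Finset.inf'_singleton]; exact hf a (by simp)
  | cons a s ha hs ih =>
    have he : (fun t => (Finset.cons a s ha).inf' (Finset.cons_nonempty ha) fun i => f i t)
        = fun t => (f a t) ⊓ (s.inf' hs fun i => f i t) := by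
      funext t; exact Finset.inf'_cons hs _
    rw [he]
    exact (hf a (by simp)).inf (ih fun i hi => hf i (by simp [hi]))

private lemma comp_lemma (k : ℕ) (hk : 1 ≤ k) (c : ℝ) (hc : 0 < c)
    (D : Matrix (Fin k) (Fin k) ℝ)
    (hMetzler : ∀ i j : Fin k, i ≠ j → 0 ≤ D i j)
    (μ : ℝ) (hμ : μ ≤ 0) (ξ : Fin k → ℝ) (hξpos : ∀ i, 0 < ξ i)
    (heig : D.mulVec ξ = μ • ξ)
    (u : ℝ → Fin k → ℝ)
    (hsol : ∀ t ∈ Set.Ici (0 : ℝ),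
      HasDerivAt u (D.mulVec (u t) - (c / 2) • (u t * u t)) t)
    (hnonneg : ∀ t ∈ Set.Ici (0 : ℝ), ∀ i : Fin k, 0 ≤ u t i)
    (B : ℝ → ℝ) (hB : ∀ t, B t = ⨅ i, u t i / ξ i)
    (ξmax : ℝ) (hξmax : ξmax = ⨆ i, ξ i)
    (b : ℝ → ℝ) (hb0 : b 0 ≤ B 0) (hbnn : ∀ t ≥ (0:ℝ), 0 ≤ b t)
    (hb' : ∀ t ≥ (0:ℝ), HasDerivAt b (μ * b t - c * ξmax / 2 * (b t)^2) t) :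
    ∀ t ≥ (0:ℝ), b t ≤ B t := by
  haveI : Inhabited (Fin k) := ⟨⟨0, hk⟩⟩
  have hxile : ∀ i, ξ i ≤ ξmax := by
    intro i; rw [hξmax]; exact le_ciSup (Set.finite_range ξ).bddAbove i
  have hxmaxpos : 0 < ξmax := lt_of_lt_of_le (hξpos default) (hxile default)
  have hBle : ∀ t i, B t ≤ u t i / ξ i := by
    intro t i; rw [hB t]; exact ciInf_le (Set.finite_range _).bddBelow i
  have hBleu : ∀ t i, B t * ξ i ≤ u t i := by
    intro t i
    have := hBle t i
    rwa [le_div_iff₀ (hξpos i)] at this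
  have hBnn : ∀ t ≥ (0:ℝ), 0 ≤ B t := by
    intro t ht
    rw [hB t]
    exact le_ciInf fun i => div_nonneg (hnonneg t ht i) (hξpos i).le
  -- componentwise derivatives
  set h : Fin k → ℝ → ℝ := fun i s => u s i / ξ i with hh
  set d : ℝ → Fin k → ℝ := fun x i =>
    ((D.mulVec (u x)) i - c / 2 * (u x i * u x i)) / ξ i with hd
  have hderiv : ∀ (i) (x : ℝ), 0 ≤ x → HasDerivAt (h i) (d x i) x := by
    intro i x hx
    have h1 := (hasDerivAt_pi.mp (hsol x hx)) i
    have h2 : (D.mulVec (u x) - (c / 2) • (u x * u x)) i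
        = (D.mulVec (u x)) i - c / 2 * (u x i * u x i) := by
      simp [Pi.sub_apply, Pi.smul_apply, Pi.mul_apply, smul_eq_mul]
    exact (h2 ▸ h1).div_const (ξ i)
  have hcont : ∀ (i) (x : ℝ), 0 ≤ x → ContinuousAt (h i) x := fun i x hx =>
    (hderiv i x hx).continuousAt
  -- key: derivative lower bound at active indices
  have hkey : ∀ (x : ℝ), 0 ≤ x → ∀ i, h i x = B x →
      μ * B x - c * ξmax / 2 * (B x)^2 ≤ d x i := by
    intro x hx i hi
    have hui : u x i = B x * ξ i := by
      have h2 := hi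
      rw [hh] at h2
      simp only at h2
      rw [div_eq_iff (hξpos i).ne'] at h2
      exact h2
    have hmv : B x * (μ * ξ i) ≤ (D.mulVec (u x)) i := by
      have hsum : ∑ j, D i j * (B x * ξ j) ≤ ∑ j, D i j * u x j := by
        apply Finset.sum_le_sum
        intro j _
        rcases eq_or_ne j i with rfl | hji
        · rw [hui]
        · exact mul_le_mul_of_nonneg_left (hBleu x j) (hMetzler i j (Ne.symm hji))
      have heq : ∑ j, D i j * (B x * ξ j) = B x * (μ * ξ i) := by
        have h3 : (D.mulVec ξ) i = μ * ξ i := by rw [heig]; simp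
        calc ∑ j, D i j * (B x * ξ j) = B x * ∑ j, D i j * ξ j := by
              rw [Finset.mul_sum]; congr 1; ext j; ring
          _ = B x * (μ * ξ i) := by rw [← h3]; rfl
      have h4 : (D.mulVec (u x)) i = ∑ j, D i j * u x j := by
        simp [Matrix.mulVec, dotProduct]
      rw [h4]; rw [heq] at hsum; exact hsum
    rw [hd]
    rw [le_div_iff₀ (hξpos i)]
    rw [hui]
    nlinarith [sq_nonneg (B x), hξpos i, hxile i, mul_le_mul_of_nonneg_left (hxile i) (mul_nonneg (sq_nonneg (B x)) hc.le)]
  -- continuity of B on [0, T]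
  have hBcont : ∀ T : ℝ, 0 ≤ T → ContinuousOn B (Set.Icc 0 T) := by
    intro T hT
    have hne : (Finset.univ : Finset (Fin k)).Nonempty := ⟨default, Finset.mem_univ _⟩
    have hBeq : ∀ s ∈ Set.Icc (0:ℝ) T, B s = Finset.univ.inf' hne (fun i => h i s) := by
      intro s _
      rw [hB s]
      apply le_antisymm
      · obtain ⟨i0, _, hi0⟩ := Finset.exists_mem_eq_inf' hne (fun i => h i s)
        rw [hi0]
        exact ciInf_le (Set.finite_range _).bddBelow i0
      · exact le_ciInf fun i => Finset.inf'_le _ (Finset.mem_univ i)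
    apply ContinuousOn.congr _ hBeq
    apply contOn_inf' hne
    intro i _
    intro x hx
    exact (hcont i x hx.1).continuousWithinAt
  -- main fencing argument
  intro t ht
  rcases eq_or_lt_of_le ht with rfl | htpos
  · exact hb0
  refine le_of_forall_pos_le_add fun ε hε => ?_
  have hexppos : (0:ℝ) < Real.exp t := Real.exp_pos t
  set ε' : ℝ := ε / Real.exp t with hε'def
  have hε'pos : 0 < ε' := div_pos hε hexppos
  set q : ℝ := c * ξmax / 2 with hq
  have hqpos : 0 < q := by positivity
  have main : ∀ x ∈ Set.Icc (0:ℝ) t, b x - B x ≤ ε' * Real.exp x := by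
    apply image_le_of_liminf_slope_right_lt_deriv_boundary
      (f := fun s => b s - B s)
      (f' := fun x => (μ * b x - q * (b x)^2) - (μ * B x - q * (B x)^2))
      (B := fun s => ε' * Real.exp s) (B' := fun s => ε' * Real.exp s)
    · -- continuity of f
      exact ContinuousOn.sub
        (fun x hx => (hb' x hx.1).continuousAt.continuousWithinAt)
        (hBcont t ht)
    · -- liminf slope condition
      intro x hx r hr
      have hx0 : (0:ℝ) ≤ x := hx.1
      -- active set
      set A : Finset (Fin k) := Finset.univ.filter (fun i => h i x = B x) with hA
      have hAmem : ∀ i, i ∈ A ↔ h i x = B x := by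
        intro i; simp [hA]
      have hAne : A.Nonempty := by
        obtain ⟨i, hi⟩ := exists_eq_ciInf_of_finite (f := fun i => h i x)
        exact ⟨i, (hAmem i).mpr (by rw [hi, ← hB x])⟩
      -- slopes of h i for active i tend to d x i
      have htend : ∀ i, 0 ≤ x → Tendsto (slope (h i) x) (𝓝[>] x) (𝓝 (d x i)) := by
        intro i hx0'
        exact (hasDerivAt_iff_tendsto_slope.mp (hderiv i x hx0')).mono_left
          (nhdsWithin_mono x fun z hz => ne_of_gt hz)
      have htendb : Tendsto (slope b x) (𝓝[>] x) (𝓝 (μ * b x - q * (b x)^2)) :=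
        (hasDerivAt_iff_tendsto_slope.mp (hb' x hx0)).mono_left
          (nhdsWithin_mono x fun z hz => ne_of_gt hz)
      -- eventually: slope b - slope (h i) < r for each active i
      have hev1 : ∀ᶠ z in 𝓝[>] x, ∀ i ∈ A, slope b x z - slope (h i) x z < r := by
        rw [Filter.eventually_all_finset]
        intro i hiA
        have hdi : μ * B x - q * (B x)^2 ≤ d x i := hkey x hx0 i ((hAmem i).mp hiA)
        have hlim : Tendsto (fun z => slope b x z - slope (h i) x z) (𝓝[>] x)
            (𝓝 ((μ * b x - q * (b x)^2) - d x i)) := htendb.sub (htend i hx0)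
        apply hlim.eventually_lt_const
        calc (μ * b x - q * (b x)^2) - d x i
            ≤ (μ * b x - q * (b x)^2) - (μ * B x - q * (B x)^2) := by linarith
          _ < r := hr
      -- eventually: the minimizer at z is active
      have hev2 : ∀ᶠ z in 𝓝[>] x, ∃ i ∈ A, B z = h i z := by
        obtain ⟨i0, hi0A⟩ := hAne
        set C : Finset (Fin k) := Finset.univ \ A with hC
        rcases C.eq_empty_or_nonempty with hCe | hCne
        · -- all indices active
          filter_upwards with z
          obtain ⟨i, hi⟩ := exists_eq_ciInf_of_finite (f := fun i => h i z)
          refine ⟨i, ?_, by rw [hB z, ← hi]⟩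
          by_contra hiA
          have : i ∈ C := by rw [hC, Finset.mem_sdiff]; exact ⟨Finset.mem_univ i, hiA⟩
          rw [hCe] at this; exact absurd this (Finset.notMem_empty i)
        · set β : ℝ := C.inf' hCne (fun j => h j x) with hβ
          have hβgt : B x < β := by
            obtain ⟨j0, hj0C, hj0⟩ := Finset.exists_mem_eq_inf' hCne (fun j => h j x)
            rw [hβ, hj0]
            rcases lt_or_eq_of_le (hBle x j0) with hlt | heq
            · exact hlt
            · exfalso
              have : j0 ∈ A := (hAmem j0).mpr heq.symm
              simp [hC] at hj0C
              exact hj0C this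
          set m : ℝ := (B x + β)/2 with hm
          have hm1 : B x < m := by rw [hm]; linarith
          have hm2 : m < β := by rw [hm]; linarith
          have hevA : ∀ᶠ z in 𝓝[>] x, h i0 z < m := by
            have h0 : h i0 x = B x := (hAmem i0).mp hi0A
            have := ((hcont i0 x hx0).tendsto).eventually_lt_const (h0 ▸ hm1)
            exact this.filter_mono nhdsWithin_le_nhds
          have hevC : ∀ᶠ z in 𝓝[>] x, ∀ j ∈ C, m < h j z := by
            rw [Filter.eventually_all_finset]
            intro j hjC
            have hjβ : β ≤ h j x := Finset.inf'_le _ hjC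
            have := ((hcont j x hx0).tendsto).eventually_const_lt (lt_of_lt_of_le hm2 hjβ)
            exact this.filter_mono nhdsWithin_le_nhds
          filter_upwards [hevA, hevC] with z hzA hzC
          obtain ⟨i, hi⟩ := exists_eq_ciInf_of_finite (f := fun i => h i z)
          have hBz : B z = h i z := by rw [hB z, ← hi]
          refine ⟨i, ?_, hBz⟩
          by_contra hiA
          have hiC : i ∈ C := by rw [hC, Finset.mem_sdiff]; exact ⟨Finset.mem_univ i, hiA⟩
          have h5 : m < h i z := hzC i hiC
          have h6 : B z ≤ h i0 z := hBle z i0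
          rw [hBz] at h6
          linarith
      -- combine
      have hev3 : ∀ᶠ z in 𝓝[>] x, slope (fun s => b s - B s) x z < r := by
        filter_upwards [hev1, hev2, eventually_mem_nhdsWithin] with z h1 h2 hz
        obtain ⟨i, hiA, hBzi⟩ := h2
        have hBxi : B x = h i x := ((hAmem i).mp hiA).symm
        have hslope : slope (fun s => b s - B s) x z = slope b x z - slope (h i) x z := by
          simp only [slope_def_field]
          rw [hBzi, hBxi]
          ring
        rw [hslope]
        exact h1 i hiA
      exact hev3.frequently
    · -- initial condition
      simp only [Real.exp_zero, mul_one]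
      linarith
    · -- derivative of the barrier
      intro x
      exact (Real.hasDerivAt_exp x).const_mul ε'
    · -- bound at touching points
      intro x hx htouch
      have hx0 : (0:ℝ) ≤ x := hx.1
      have hbx : 0 ≤ b x := hbnn x hx0
      have hBx : 0 ≤ B x := hBnn x hx0
      have hεx : 0 < ε' * Real.exp x := by positivity
      have hle : B x ≤ b x := by linarith
      nlinarith [mul_nonneg hqpos.le (mul_nonneg (sub_nonneg.mpr hle) (add_nonneg hBx hbx))]
  have := main t (Set.mem_Icc.mpr ⟨ht, le_refl t⟩)
  have hε'e : ε' * Real.exp t = ε := by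
    rw [hε'def]; field_simp
  linarith [this, hε'e ▸ this]

theorem stmt3 (k : ℕ) (hk : 1 ≤ k) (c : ℝ) (hc : 0 < c)
    (D : Matrix (Fin k) (Fin k) ℝ)
    (hMetzler : ∀ i j : Fin k, i ≠ j → 0 ≤ D i j)
    (μ : ℝ) (hμ : μ ≤ 0) (ξ : Fin k → ℝ) (hξpos : ∀ i, 0 < ξ i)
    (heig : D.mulVec ξ = μ • ξ)
    (lam : Fin k → ℝ) (hlam : ∀ i, 0 ≤ lam i)
    (u : ℝ → Fin k → ℝ)
    (hsol : ∀ t ∈ Set.Ici (0 : ℝ),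
      HasDerivAt u (D.mulVec (u t) - (c / 2) • (u t * u t)) t)
    (hnonneg : ∀ t ∈ Set.Ici (0 : ℝ), ∀ i : Fin k, 0 ≤ u t i)
    (hinit : u 0 = lam)
    (B : ℝ → ℝ) (hB : ∀ t, B t = ⨅ i, u t i / ξ i)
    (ξmax : ℝ) (hξmax : ξmax = ⨆ i, ξ i) :
    (μ = 0 →
      ∀ t ≥ (0 : ℝ), B 0 / (1 + c * ξmax / 2 * B 0 * t) ≤ B t) ∧
    (μ < 0 →
      ∀ t ≥ (0 : ℝ), B 0 * Real.exp (μ * t) /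
        (1 + c * ξmax / (2 * |μ|) * B 0 * (1 - Real.exp (μ * t))) ≤ B t) := by
  haveI : Inhabited (Fin k) := ⟨⟨0, hk⟩⟩
  have hxile : ∀ i, ξ i ≤ ξmax := by
    intro i; rw [hξmax]; exact le_ciSup (Set.finite_range ξ).bddAbove i
  have hxmaxpos : 0 < ξmax := lt_of_lt_of_le (hξpos default) (hxile default)
  have hB0 : 0 ≤ B 0 := by
    rw [hB 0]
    exact le_ciInf fun i => div_nonneg (hnonneg 0 (Set.mem_Ici.mpr le_rfl) i) (hξpos i).le
  constructor
  · -- critical case μ = 0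
    intro hμ0
    subst hμ0
    set q : ℝ := c * ξmax / 2 * B 0 with hq
    have hqnn : 0 ≤ q := by positivity
    have hden : ∀ s : ℝ, 0 ≤ s → (0:ℝ) < 1 + c * ξmax / 2 * B 0 * s := by
      intro s hs; nlinarith
    apply comp_lemma k hk c hc D hMetzler 0 le_rfl ξ hξpos heig u hsol hnonneg B hB
      ξmax hξmax (fun s => B 0 / (1 + c * ξmax / 2 * B 0 * s))
    · simp
    · intro s hs
      exact div_nonneg hB0 (hden s hs).le
    · intro s hs
      have hd : HasDerivAt (fun s : ℝ => 1 + c * ξmax / 2 * B 0 * s)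
          (c * ξmax / 2 * B 0) s := by
        simpa using ((hasDerivAt_id s).const_mul (c * ξmax / 2 * B 0)).const_add 1
      have hne := (hden s hs).ne'
      have h1 := (hasDerivAt_const s (B 0)).div hd hne
      refine h1.congr_deriv ?_
      field_simp
      ring
  · -- subcritical case μ < 0
    intro hμneg t ht
    have hμne : μ ≠ 0 := hμneg.ne
    have habs : |μ| = -μ := abs_of_neg hμneg
    set a : ℝ := c * ξmax / (2 * |μ|) with ha
    have hann : 0 ≤ a := by
      rw [ha, habs]
      apply div_nonneg (by positivity)
      linarith
    have hexple : ∀ s : ℝ, 0 ≤ s → Real.exp (μ * s) ≤ 1 := by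
      intro s hs
      rw [Real.exp_le_one_iff]
      exact mul_nonpos_of_nonpos_of_nonneg hμneg.le hs
    have hden : ∀ s : ℝ, 0 ≤ s →
        (0:ℝ) < 1 + c * ξmax / (2 * |μ|) * B 0 * (1 - Real.exp (μ * s)) := by
      intro s hs
      have h1 : 0 ≤ 1 - Real.exp (μ * s) := by linarith [hexple s hs]
      nlinarith [mul_nonneg (mul_nonneg hann hB0) h1]
    refine comp_lemma k hk c hc D hMetzler μ hμ ξ hξpos heig u hsol hnonneg B hB
      ξmax hξmax (fun s => B 0 * Real.exp (μ * s) /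
        (1 + c * ξmax / (2 * |μ|) * B 0 * (1 - Real.exp (μ * s)))) ?_ ?_ ?_ t ht
    · simp
    · intro s hs
      exact div_nonneg (mul_nonneg hB0 (Real.exp_pos _).le) (hden s hs).le
    · intro s hs
      have hlin : HasDerivAt (fun s : ℝ => μ * s) μ s := by
        simpa using (hasDerivAt_id s).const_mul μ
      have hexp : HasDerivAt (fun s : ℝ => Real.exp (μ * s))
          (Real.exp (μ * s) * μ) s := hlin.exp
      have hN : HasDerivAt (fun s : ℝ => B 0 * Real.exp (μ * s))
          (B 0 * (Real.exp (μ * s) * μ)) s := hexp.const_mul (B 0)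
      have hd : HasDerivAt
          (fun s : ℝ => 1 + c * ξmax / (2 * |μ|) * B 0 * (1 - Real.exp (μ * s)))
          (c * ξmax / (2 * |μ|) * B 0 * (-(Real.exp (μ * s) * μ))) s := by
        exact (((hexp.const_sub 1)).const_mul (c * ξmax / (2 * |μ|) * B 0)).const_add 1
      have hne := (hden s hs).ne'
      have h1 := hN.div hd hne
      refine h1.congr_deriv ?_
      rw [habs] at hne ⊢
      have hμne' : (2:ℝ) * -μ ≠ 0 := by
        simp only [ne_eq, mul_eq_zero, neg_eq_zero]
        push_neg
        exact ⟨two_ne_zero, hμne⟩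
      beta_reduce
      set E := Real.exp (μ * s) with hE
      set dd : ℝ := 1 + c * ξmax / (2 * -μ) * B 0 * (1 - E) with hdd
      clear_value E dd
      field_simp [hne, hμne']
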